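/- arXiv:2111.04926 — 2 statements merged into one kernel-verified Lean document; each statement's English description precedes it below -/
import Mathlib

section
/- The function g(a) = a·Φ(-a), where Φ is the standard normal CDF, has a unique maximizer a* over [0, ∞); moreover g is strictly increasing on [0, a*) and strictly decreasing on (a*, ∞). -/
/-- The density of the standard normal distribution. -/
noncomputable def stdGaussianPDF (x : ℝ) : ℝ :=
  (Real.sqrt (2 * Real.pi))⁻¹ * Real.exp (-(x ^ 2) / 2)

/-- The cumulative distribution function of the standard normal distribution. -/
noncomputable def stdGaussianCDF (x : ℝ) : ℝ :=
  ∫ t in Set.Iic x, stdGaussianPDF t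



open Set MeasureTheory Real Filter

lemma pdf_pos (x : ℝ) : 0 < stdGaussianPDF x := by
  unfold stdGaussianPDF
  positivity

lemma pdf_cont : Continuous stdGaussianPDF := by
  unfold stdGaussianPDF
  continuity

lemma pdf_even (x : ℝ) : stdGaussianPDF (-x) = stdGaussianPDF x := by
  simp [stdGaussianPDF]

lemma pdf_integrable : Integrable stdGaussianPDF := by
  have h := (integrable_exp_neg_mul_sq (by norm_num : (0:ℝ) < 1/2)).const_mul
    ((Real.sqrt (2 * Real.pi))⁻¹)
  refine h.congr (Filter.Eventually.of_forall fun x => ?_)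
  unfold stdGaussianPDF
  show (√(2 * π))⁻¹ * rexp (-(1 / 2) * x ^ 2) = _
  rw [show -(1/2:ℝ) * x ^ 2 = -(x ^ 2) / 2 by ring]

lemma pdf_hasDeriv (x : ℝ) : HasDerivAt stdGaussianPDF (-x * stdGaussianPDF x) x := by
  have h1 : HasDerivAt (fun x : ℝ => -(x ^ 2) / 2) (-x) x := by
    have := ((hasDerivAt_pow 2 x).neg).div_const 2
    simpa using this.congr_deriv (by ring)
  have h2 := (h1.exp).const_mul ((Real.sqrt (2 * Real.pi))⁻¹)
  refine HasDerivAt.congr_deriv (h2.congr_of_eventuallyEq ?_) (by unfold stdGaussianPDF; ring)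
  filter_upwards with y; simp [stdGaussianPDF]
lemma pdf_tendsto : Tendsto stdGaussianPDF atTop (nhds 0) := by
  have h1 : Tendsto (fun x : ℝ => x ^ 2 / 2) atTop atTop :=
    (tendsto_pow_atTop two_ne_zero).atTop_div_const (by norm_num)
  have h2 := (Real.tendsto_exp_neg_atTop_nhds_zero.comp h1).const_mul
    ((Real.sqrt (2 * Real.pi))⁻¹)
  simp only [mul_zero] at h2
  refine h2.congr fun x => ?_
  unfold stdGaussianPDF
  simp [Function.comp, neg_div]

lemma cdf_eq (x : ℝ) :
    stdGaussianCDF x = stdGaussianCDF 0 + ∫ t in (0:ℝ)..x, stdGaussianPDF t := by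
  unfold stdGaussianCDF
  rcases le_or_gt 0 x with h | h
  · rw [intervalIntegral.integral_of_le h, ← setIntegral_union (Iic_disjoint_Ioc le_rfl)
      measurableSet_Ioc pdf_integrable.integrableOn pdf_integrable.integrableOn,
      Iic_union_Ioc_eq_Iic h]
  · rw [intervalIntegral.integral_of_ge h.le]
    have hu : (∫ t in Iic (0:ℝ), stdGaussianPDF t)
        = (∫ t in Iic x, stdGaussianPDF t) + ∫ t in Ioc x 0, stdGaussianPDF t := by
      rw [← setIntegral_union (Iic_disjoint_Ioc le_rfl) measurableSet_Ioc
        pdf_integrable.integrableOn pdf_integrable.integrableOn, Iic_union_Ioc_eq_Iic h.le]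
    rw [hu]; ring

lemma cdf_hasDeriv (x : ℝ) : HasDerivAt stdGaussianCDF (stdGaussianPDF x) x := by
  have h : HasDerivAt (fun u => ∫ t in (0:ℝ)..u, stdGaussianPDF t) (stdGaussianPDF x) x :=
    (pdf_cont.integral_hasStrictDerivAt 0 x).hasDerivAt
  have h2 := (hasDerivAt_const x (stdGaussianCDF 0)).add h
  simp only [zero_add] at h2
  exact h2.congr_of_eventuallyEq (Filter.Eventually.of_forall fun y => cdf_eq y)

lemma cdf_cont : Continuous stdGaussianCDF :=
  continuous_iff_continuousAt.2 fun x => (cdf_hasDeriv x).continuousAt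

lemma cdf_neg_eq (a : ℝ) : stdGaussianCDF (-a) = ∫ t in Set.Ioi a, stdGaussianPDF t := by
  unfold stdGaussianCDF
  rw [show Ioi a = Ioi (-(-a)) by simp, ← integral_comp_neg_Iic]
  exact setIntegral_congr_fun measurableSet_Iic fun t _ => (pdf_even t).symm

lemma cdf_pos (x : ℝ) : 0 < stdGaussianCDF x := by
  unfold stdGaussianCDF
  rw [setIntegral_pos_iff_support_of_nonneg_ae
    (Filter.Eventually.of_forall fun t => (pdf_pos t).le) pdf_integrable.integrableOn]
  have : Function.support stdGaussianPDF = univ := by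
    ext t; simp [Function.support, (pdf_pos t).ne']
  rw [this, univ_inter]
  simp [Real.volume_Iic]

lemma integrable_mul_pdf (a : ℝ) (ha : 0 ≤ a) :
    IntegrableOn (fun t => t * stdGaussianPDF t) (Set.Ioi a) := by
  refine integrableOn_Ioi_deriv_of_nonneg' (g := fun t => -stdGaussianPDF t) (l := 0)
    (fun x _ => ((pdf_hasDeriv x).neg).congr_deriv (by ring)) (fun x hx => ?_) ?_
  · exact mul_nonneg (le_trans ha (le_of_lt hx)) (pdf_pos x).le
  · simpa using pdf_tendsto.neg

lemma integral_mul_pdf (a : ℝ) (ha : 0 ≤ a) :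
    ∫ t in Set.Ioi a, t * stdGaussianPDF t = stdGaussianPDF a := by
  have := integral_Ioi_of_hasDerivAt_of_tendsto' (f := fun t => -stdGaussianPDF t)
    (f' := fun t => t * stdGaussianPDF t) (m := 0)
    (fun x _ => ((pdf_hasDeriv x).neg).congr_deriv (by ring))
    (integrable_mul_pdf a ha) (by simpa using pdf_tendsto.neg)
  simpa using this

lemma tail_lt (a : ℝ) (ha : 0 < a) : stdGaussianCDF (-a) < stdGaussianPDF a / a := by
  have hInt : IntegrableOn (fun t => (t / a - 1) * stdGaussianPDF t) (Set.Ioi a) := by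
    have hA : IntegrableOn (fun t => t / a * stdGaussianPDF t) (Set.Ioi a) := by
      refine ((integrable_mul_pdf a ha.le).div_const a).congr
        (Filter.Eventually.of_forall fun t => by ring)
    refine (hA.sub pdf_integrable.integrableOn).congr
      (Filter.Eventually.of_forall fun t => by simp only [Pi.sub_apply]; ring)
  have key : 0 < ∫ t in Set.Ioi a, (t / a - 1) * stdGaussianPDF t := by
    rw [setIntegral_pos_iff_support_of_nonneg_ae _ hInt]
    · have hsub : Set.Ioi a ⊆ Function.support fun t => (t / a - 1) * stdGaussianPDF t := by
        intro t ht
        have h1 : (1:ℝ) < t / a := (one_lt_div ha).2 ht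
        have := mul_pos (by linarith : (0:ℝ) < t / a - 1) (pdf_pos t)
        exact this.ne'
      rw [inter_eq_right.mpr hsub]
      simp [Real.volume_Ioi]
    · filter_upwards [ae_restrict_mem measurableSet_Ioi] with t ht
      simp only [Pi.zero_apply]
      have h1 : (1:ℝ) ≤ t / a := (one_le_div ha).2 ht.le
      exact mul_nonneg (by linarith) (pdf_pos t).le
  have hint : ∫ t in Set.Ioi a, (t / a - 1) * stdGaussianPDF t
      = stdGaussianPDF a / a - stdGaussianCDF (-a) := by
    rw [cdf_neg_eq]
    have h1 : ∫ t in Set.Ioi a, (t / a - 1) * stdGaussianPDF t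
        = (∫ t in Set.Ioi a, t * stdGaussianPDF t) / a - ∫ t in Set.Ioi a, stdGaussianPDF t := by
      rw [← integral_div, ← integral_sub]
      · exact setIntegral_congr_fun measurableSet_Ioi fun t _ => by ring
      · exact (integrable_mul_pdf a ha.le).div_const a
      · exact pdf_integrable.integrableOn
    rw [h1, integral_mul_pdf a ha.le]
  linarith [hint ▸ key]

noncomputable def hAux (a : ℝ) : ℝ := stdGaussianCDF (-a) - a * stdGaussianPDF a

lemma g_hasDeriv (a : ℝ) :
    HasDerivAt (fun x => x * stdGaussianCDF (-x)) (hAux a) a := by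
  have hΦ : HasDerivAt (fun x : ℝ => stdGaussianCDF (-x)) (stdGaussianPDF (-a) * (-1)) a :=
    (cdf_hasDeriv (-a)).comp a ((hasDerivAt_id a).neg)
  have := (hasDerivAt_id a).mul hΦ
  refine this.congr_deriv ?_
  simp only [id_eq]
  rw [pdf_even]; unfold hAux; ring

lemma hAux_hasDeriv (a : ℝ) :
    HasDerivAt hAux ((a ^ 2 - 2) * stdGaussianPDF a) a := by
  have hΦ : HasDerivAt (fun x : ℝ => stdGaussianCDF (-x)) (stdGaussianPDF (-a) * (-1)) a :=
    (cdf_hasDeriv (-a)).comp a ((hasDerivAt_id a).neg)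
  have hp : HasDerivAt (fun x : ℝ => x * stdGaussianPDF x)
      (1 * stdGaussianPDF a + a * (-a * stdGaussianPDF a)) a :=
    (hasDerivAt_id a).mul (pdf_hasDeriv a)
  refine (hΦ.sub hp).congr_deriv ?_
  rw [pdf_even]; ring

lemma hAux_cont : Continuous hAux :=
  continuous_iff_continuousAt.2 fun x => (hAux_hasDeriv x).continuousAt

lemma one_le_sqrt_two : (1:ℝ) ≤ Real.sqrt 2 := by
  rw [show (1:ℝ) = Real.sqrt 1 by simp]
  exact Real.sqrt_le_sqrt (by norm_num)

lemma hAux_anti : StrictAntiOn hAux (Icc 0 (Real.sqrt 2)) := by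
  refine strictAntiOn_of_deriv_neg (convex_Icc _ _) hAux_cont.continuousOn fun x hx => ?_
  rw [interior_Icc] at hx
  rw [(hAux_hasDeriv x).deriv]
  have hx2 : x ^ 2 < 2 := by
    have := sq_lt_sq' (by nlinarith [hx.1, one_le_sqrt_two] : -Real.sqrt 2 < x) hx.2
    rwa [Real.sq_sqrt (by norm_num : (0:ℝ) ≤ 2)] at this
  nlinarith [pdf_pos x]

lemma hAux_neg {a : ℝ} (ha : 1 ≤ a) : hAux a < 0 := by
  have h0 : (0:ℝ) < a := lt_of_lt_of_le one_pos ha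
  have h1 := tail_lt a h0
  have h2 : stdGaussianPDF a / a ≤ a * stdGaussianPDF a := by
    rw [div_le_iff₀ h0]
    nlinarith [pdf_pos a, mul_le_mul ha ha zero_le_one h0.le]
  unfold hAux; linarith

lemma hAux_zero_pos : 0 < hAux 0 := by
  have := cdf_pos 0
  simp only [hAux, neg_zero, zero_mul, sub_zero]
  exact this

theorem unique_maximizer_aPhi' :
    ∃ astar : ℝ, 0 ≤ astar ∧
      (∀ a, 0 ≤ a → a * stdGaussianCDF (-a) ≤ astar * stdGaussianCDF (-astar)) ∧
      (∀ a, 0 ≤ a →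
        (∀ b, 0 ≤ b → b * stdGaussianCDF (-b) ≤ a * stdGaussianCDF (-a)) → a = astar) ∧
      StrictMonoOn (fun a => a * stdGaussianCDF (-a)) (Set.Ico 0 astar) ∧
      StrictAntiOn (fun a => a * stdGaussianCDF (-a)) (Set.Ioi astar) := by
  obtain ⟨astar, hmem, hzero⟩ : ∃ a ∈ Icc (0:ℝ) 1, hAux a = 0 := by
    have h01 : (0:ℝ) ≤ 1 := by norm_num
    have := intermediate_value_Icc' h01 hAux_cont.continuousOn
    have h0 : (0:ℝ) ∈ Icc (hAux 1) (hAux 0) := ⟨(hAux_neg le_rfl).le, hAux_zero_pos.le⟩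
    obtain ⟨a, ha, h⟩ := this h0
    exact ⟨a, ha, h⟩
  have hastar_mem : astar ∈ Icc (0:ℝ) (Real.sqrt 2) :=
    ⟨hmem.1, le_trans hmem.2 one_le_sqrt_two⟩
  have sign_pos : ∀ a ∈ Ico (0:ℝ) astar, 0 < hAux a := by
    intro a ha
    have hmem' : a ∈ Icc (0:ℝ) (Real.sqrt 2) :=
      ⟨ha.1, le_trans (le_of_lt ha.2) hastar_mem.2⟩
    have := hAux_anti hmem' hastar_mem ha.2
    rw [hzero] at this; linarith
  have sign_neg : ∀ a, astar < a → hAux a < 0 := by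
    intro a ha
    rcases le_or_gt a (Real.sqrt 2) with h | h
    · have hmem' : a ∈ Icc (0:ℝ) (Real.sqrt 2) := ⟨le_trans hmem.1 ha.le, h⟩
      have := hAux_anti hastar_mem hmem' ha
      rw [hzero] at this; linarith
    · exact hAux_neg (le_trans one_le_sqrt_two h.le)
  have gcont : Continuous fun a : ℝ => a * stdGaussianCDF (-a) :=
    continuous_id.mul (cdf_cont.comp continuous_neg)
  have gmono : StrictMonoOn (fun a => a * stdGaussianCDF (-a)) (Icc 0 astar) := by
    refine strictMonoOn_of_deriv_pos (convex_Icc _ _) gcont.continuousOn fun x hx => ?_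
    rw [interior_Icc] at hx
    rw [(g_hasDeriv x).deriv]
    exact sign_pos x ⟨hx.1.le, hx.2⟩
  have ganti : StrictAntiOn (fun a => a * stdGaussianCDF (-a)) (Ici astar) := by
    refine strictAntiOn_of_deriv_neg (convex_Ici _) gcont.continuousOn fun x hx => ?_
    rw [interior_Ici] at hx
    rw [(g_hasDeriv x).deriv]
    exact sign_neg x hx
  have hmax : ∀ a, 0 ≤ a → a * stdGaussianCDF (-a) ≤ astar * stdGaussianCDF (-astar) := by
    intro a ha
    rcases lt_trichotomy a astar with h | h | h
    · exact (gmono ⟨ha, h.le⟩ ⟨hmem.1, le_rfl⟩ h).le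
    · rw [h]
    · exact (ganti self_mem_Ici h.le h).le
  refine ⟨astar, hmem.1, hmax, ?_, gmono.mono Ico_subset_Icc_self,
    ganti.mono fun x hx => (le_of_lt hx : astar ≤ x)⟩
  intro a ha hmaxa
  by_contra hne
  rcases lt_or_gt_of_ne hne with h | h
  · have h1 := gmono ⟨ha, h.le⟩ ⟨hmem.1, le_rfl⟩ h
    have h2 := hmaxa astar hmem.1
    simp only at h1 h2; linarith
  · have h1 := ganti self_mem_Ici h.le h
    have h2 := hmaxa astar hmem.1
    simp only at h1 h2; linarith

/-- The function `g a = a * Φ(-a)` has a unique maximizer `a*` over `[0, ∞)`;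
moreover `g` is strictly increasing on `[0, a*)` and strictly decreasing on `(a*, ∞)`. -/
theorem unique_maximizer_aPhi :
    ∃ astar : ℝ, 0 ≤ astar ∧
      (∀ a, 0 ≤ a → a * stdGaussianCDF (-a) ≤ astar * stdGaussianCDF (-astar)) ∧
      (∀ a, 0 ≤ a →
        (∀ b, 0 ≤ b → b * stdGaussianCDF (-b) ≤ a * stdGaussianCDF (-a)) → a = astar) ∧
      StrictMonoOn (fun a => a * stdGaussianCDF (-a)) (Set.Ico 0 astar) ∧
      StrictAntiOn (fun a => a * stdGaussianCDF (-a)) (Set.Ioi astar) := by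
  exact unique_maximizer_aPhi'
end

section
/- Let V be a real vector space, L : V → ℝ and m : V → ℝⁿ linear maps, and Θ ⊆ V a convex set. Then the modulus of continuity ω(ε) = sup{L(θ) : ‖m(θ)‖ ≤ ε, θ ∈ Θ} is concave in ε on [0, ∞) (as an extended-real-valued function). -/
lemma aux_div_lt {l : ℝ} (hl : 0 < l) (x c : EReal) :
    x / (l : EReal) < c ↔ x < (l : EReal) * c := by
  rw [lt_iff_not_ge, lt_iff_not_ge,
    EReal.le_div_iff_mul_le (by exact_mod_cast hl) (by simp), mul_comm]

/-- The modulus of continuity `ω(ε) = sup{L(θ) : ‖m(θ)‖ ≤ ε, θ ∈ Θ}`, as an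
extended-real-valued function (taking value `⊥` when the constraint set is empty). -/
noncomputable def modulusE {V : Type*} [AddCommGroup V] [Module ℝ V] {n : ℕ}
    (L : V →ₗ[ℝ] ℝ) (m : V →ₗ[ℝ] EuclideanSpace ℝ (Fin n)) (Θ : Set V) (ε : ℝ) : EReal :=
  sSup ((fun θ => (L θ : EReal)) '' {θ ∈ Θ | ‖m θ‖ ≤ ε})

/-- If `Θ` is convex and `L`, `m` are linear, then the modulus of continuity
`ω(ε) = sup{L(θ) : ‖m(θ)‖ ≤ ε, θ ∈ Θ}` is concave in `ε` on `[0, ∞)`. -/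
theorem modulus_concaveOn {V : Type*} [AddCommGroup V] [Module ℝ V] (n : ℕ)
    (L : V →ₗ[ℝ] ℝ) (m : V →ₗ[ℝ] EuclideanSpace ℝ (Fin n))
    (Θ : Set V) (hΘ : Convex ℝ Θ) :
    ∀ ε₁ ∈ Set.Ici (0 : ℝ), ∀ ε₂ ∈ Set.Ici (0 : ℝ), ∀ lam ∈ Set.Icc (0 : ℝ) 1,
      (lam : EReal) * modulusE L m Θ ε₁ + ((1 - lam : ℝ) : EReal) * modulusE L m Θ ε₂ ≤
        modulusE L m Θ (lam * ε₁ + (1 - lam) * ε₂) := by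
  intro ε₁ hε₁ ε₂ hε₂ lam hlam
  obtain ⟨hl0, hl1⟩ := hlam
  simp only [Set.mem_Ici] at hε₁ hε₂
  set μ : ℝ := 1 - lam with hμdef
  have hμ0 : 0 ≤ μ := by simp [hμdef]; linarith
  -- key feasibility fact
  have key : ∀ θ₁ ∈ {θ ∈ Θ | ‖m θ‖ ≤ ε₁}, ∀ θ₂ ∈ {θ ∈ Θ | ‖m θ‖ ≤ ε₂},
      ((lam * L θ₁ + μ * L θ₂ : ℝ) : EReal) ≤ modulusE L m Θ (lam * ε₁ + μ * ε₂) := by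
    rintro θ₁ ⟨h1Θ, h1m⟩ θ₂ ⟨h2Θ, h2m⟩
    have hmem : lam • θ₁ + μ • θ₂ ∈ Θ := hΘ h1Θ h2Θ hl0 hμ0 (by simp [hμdef])
    have hnorm : ‖m (lam • θ₁ + μ • θ₂)‖ ≤ lam * ε₁ + μ * ε₂ := by
      rw [map_add, map_smul, map_smul]
      calc ‖lam • m θ₁ + μ • m θ₂‖ ≤ ‖lam • m θ₁‖ + ‖μ • m θ₂‖ := norm_add_le _ _
        _ = |lam| * ‖m θ₁‖ + |μ| * ‖m θ₂‖ := by
            rw [norm_smul, norm_smul, Real.norm_eq_abs, Real.norm_eq_abs]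
        _ = lam * ‖m θ₁‖ + μ * ‖m θ₂‖ := by
            rw [abs_of_nonneg hl0, abs_of_nonneg hμ0]
        _ ≤ lam * ε₁ + μ * ε₂ :=
            add_le_add (mul_le_mul_of_nonneg_left h1m hl0)
              (mul_le_mul_of_nonneg_left h2m hμ0)
    apply le_sSup
    refine ⟨lam • θ₁ + μ • θ₂, ⟨hmem, hnorm⟩, ?_⟩
    simp [map_add, map_smul]
  rcases eq_or_lt_of_le hl0 with h0 | h0
  · -- lam = 0
    have hμ1 : μ = 1 := by simp [hμdef, ← h0]
    simp only [← h0, hμ1, EReal.coe_zero, zero_mul, zero_add, EReal.coe_one, one_mul, le_refl]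
  rcases eq_or_lt_of_le hl1 with h1 | h1
  · -- lam = 1
    have hμ1 : μ = 0 := by simp [hμdef, h1]
    simp only [h1, hμ1, EReal.coe_one, one_mul, EReal.coe_zero, zero_mul,
      add_zero, mul_zero, le_refl]
  have hμpos : 0 < μ := by simp [hμdef]; linarith
  apply EReal.add_le_of_forall_lt
  intro x hx y hy
  rw [← aux_div_lt h0] at hx
  rw [← aux_div_lt hμpos] at hy
  rw [modulusE, lt_sSup_iff] at hx hy
  obtain ⟨_, ⟨θ₁, hθ₁, rfl⟩, hx1⟩ := hx
  obtain ⟨_, ⟨θ₂, hθ₂, rfl⟩, hy1⟩ := hy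
  rw [aux_div_lt h0] at hx1
  rw [aux_div_lt hμpos] at hy1
  calc x + y ≤ (lam : EReal) * (L θ₁ : EReal) + (μ : EReal) * (L θ₂ : EReal) :=
        add_le_add hx1.le hy1.le
    _ = ((lam * L θ₁ + μ * L θ₂ : ℝ) : EReal) := by
        rw [EReal.coe_add, EReal.coe_mul, EReal.coe_mul]
    _ ≤ modulusE L m Θ (lam * ε₁ + μ * ε₂) := key θ₁ hθ₁ θ₂ hθ₂
end
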